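/- For each of the four pairs (λ, p) given by (−1, (1,0,0,0)), (−1/2, (1,1,0,0)), (−1/3, (1,1,1,0)), (−1/4, (1,1,1,1)), the polynomial F = f0 + λ·q² ∈ ℂ[x0,x1,x2,x3] satisfies: F(p) = 0, all four partial derivatives of F vanish at p, and the 4×4 Hessian matrix of second partial derivatives of F evaluated at p has rank 3. Hence p is an ordinary double point (node) of the quartic surface {F = 0} in ℙ³(ℂ). -/

import Mathlib

open MvPolynomial

noncomputable def q : MvPolynomial (Fin 4) ℂ := X 0 ^ 2 + X 1 ^ 2 + X 2 ^ 2 + X 3 ^ 2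
noncomputable def f0 : MvPolynomial (Fin 4) ℂ := X 0 ^ 4 + X 1 ^ 4 + X 2 ^ 4 + X 3 ^ 4

/-- The Hessian matrix of a polynomial F at a point p. -/
noncomputable def hessianAt (F : MvPolynomial (Fin 4) ℂ) (p : Fin 4 → ℂ) :
    Matrix (Fin 4) (Fin 4) ℂ :=
  Matrix.of fun i j => eval p (pderiv i (pderiv j F))

lemma pderiv_f0 (j : Fin 4) : pderiv j f0 = 4 * X j ^ 3 := by
  fin_cases j <;> simp [f0, pderiv_X]

lemma pderiv_q (j : Fin 4) : pderiv j q = 2 * X j := by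
  fin_cases j <;> simp [q, pderiv_X]

lemma pderiv_four (i : Fin 4) : pderiv i (4 : MvPolynomial (Fin 4) ℂ) = 0 := by
  rw [← map_ofNat (C : ℂ →+* MvPolynomial (Fin 4) ℂ) 4, pderiv_C]

lemma pderiv_F (l : ℂ) (j : Fin 4) : pderiv j (f0 + C l * q ^ 2) =
    4 * X j ^ 3 + C (4 * l) * (q * X j) := by
  simp only [map_add, pderiv_mul, pderiv_C, pderiv_pow, pderiv_f0, pderiv_q, map_mul, map_ofNat]
  ring

lemma pderiv2_F (l : ℂ) (i j : Fin 4) : pderiv i (pderiv j (f0 + C l * q ^ 2)) =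
    (if i = j then 12 * X j ^ 2 + C (4 * l) * q else 0) + C (8 * l) * (X i * X j) := by
  rw [pderiv_F]
  simp only [map_add, pderiv_mul, pderiv_C, pderiv_pow, pderiv_q, pderiv_X, map_mul, map_ofNat,
    pderiv_four]
  split
  · subst ‹i = j›; simp only [Pi.single_eq_same]; ring
  · rw [Pi.single_eq_of_ne (Ne.symm ‹i ≠ j›)]; ring

lemma hessian_entry (l : ℂ) (p : Fin 4 → ℂ) (i j : Fin 4) :
    hessianAt (f0 + C l * q ^ 2) p i j =
    (if i = j then 12 * p j ^ 2 + 4 * l * (p 0 ^ 2 + p 1 ^ 2 + p 2 ^ 2 + p 3 ^ 2) else 0)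
      + 8 * l * (p i * p j) := by
  show eval p _ = _
  rw [pderiv2_F]
  split <;> simp [q]

lemma rank_conj {H A : Matrix (Fin 4) (Fin 4) ℂ} {d : Fin 4 → ℂ} (hA : IsUnit A.det)
    (h : H * A = A * Matrix.diagonal d) : H.rank = (Matrix.diagonal d).rank := by
  rw [← Matrix.rank_mul_eq_left_of_isUnit_det A H hA, h,
    Matrix.rank_mul_eq_right_of_isUnit_det A _ hA]

lemma rank_diag_3 (d : Fin 4 → ℂ) (h0 : d 0 = 0) (h1 : d 1 ≠ 0) (h2 : d 2 ≠ 0)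
    (h3 : d 3 ≠ 0) : (Matrix.diagonal d).rank = 3 := by
  rw [Matrix.rank_diagonal, Fintype.card_subtype, Finset.card_filter, Fin.sum_univ_four]
  simp [h0, h1, h2, h3]

lemma rank_case (l : ℂ) (p : Fin 4 → ℂ) (A B : Matrix (Fin 4) (Fin 4) ℂ) (d : Fin 4 → ℂ)
    (hAB : A * B = 1) (h : hessianAt (f0 + C l * q ^ 2) p * A = A * Matrix.diagonal d)
    (h0 : d 0 = 0) (h1 : d 1 ≠ 0) (h2 : d 2 ≠ 0) (h3 : d 3 ≠ 0) :
    (hessianAt (f0 + C l * q ^ 2) p).rank = 3 := by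
  rw [rank_conj (Matrix.isUnit_det_of_right_inverse hAB) h, rank_diag_3 d h0 h1 h2 h3]

open Fin.NatCast in
lemma fin4_cast0 : ((0 : ℕ) : Fin 4) = 0 := rfl
open Fin.NatCast in
lemma fin4_cast1 : ((1 : ℕ) : Fin 4) = 1 := rfl
open Fin.NatCast in
lemma fin4_cast2 : ((2 : ℕ) : Fin 4) = 2 := rfl
open Fin.NatCast in
lemma fin4_cast3 : ((3 : ℕ) : Fin 4) = 3 := rfl

set_option maxHeartbeats 4000000 in
theorem stmt9 :
    ∀ lp ∈ [((-1 : ℂ), (![1, 0, 0, 0] : Fin 4 → ℂ)),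
            (-(1/2), ![1, 1, 0, 0]),
            (-(1/3), ![1, 1, 1, 0]),
            (-(1/4), ![1, 1, 1, 1])],
      eval lp.2 (f0 + C lp.1 * q ^ 2) = 0 ∧
      (∀ i : Fin 4, eval lp.2 (pderiv i (f0 + C lp.1 * q ^ 2)) = 0) ∧
      (hessianAt (f0 + C lp.1 * q ^ 2) lp.2).rank = 3 := by
  intro lp hlp
  simp only [List.mem_cons, List.not_mem_nil, or_false] at hlp
  rcases hlp with rfl | rfl | rfl | rfl
  · refine ⟨by simp [f0, q], fun i => by rw [pderiv_F]; fin_cases i <;> simp [q], ?_⟩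
    refine rank_case _ _ 1 1 ![0, -4, -4, -4] (by simp) ?_ rfl (by norm_num) (by exact (by norm_num : (-4 : ℂ) ≠ 0))
      (by exact (by norm_num : (-4 : ℂ) ≠ 0))
    ext i j
    fin_cases i <;> fin_cases j <;>
      · simp only [Matrix.mul_apply, Fin.sum_univ_four, hessian_entry]
        norm_num [Matrix.diagonal, Matrix.one_apply, Matrix.vecHead, Matrix.vecTail,
            Fin.mk_zero, Fin.mk_one, show (⟨2, by norm_num⟩ : Fin 4) = 2 from rfl,
            show (⟨3, by norm_num⟩ : Fin 4) = 3 from rfl] <;>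
          (try split_ifs) <;> (try simp_all (config := { decide := true })) <;> (try norm_num) <;> (try decide)
  · refine ⟨by simp [f0, q]; norm_num, fun i => by rw [pderiv_F]; fin_cases i <;> simp [q] <;> norm_num, ?_⟩
    refine rank_case _ _ !![1,1,0,0;1,-1,0,0;0,0,1,0;0,0,0,1]
      !![1/2,1/2,0,0;1/2,-1/2,0,0;0,0,1,0;0,0,0,1] ![0, 8, -4, -4] ?_ ?_ rfl (by norm_num)
      (by exact (by norm_num : (-4 : ℂ) ≠ 0)) (by exact (by norm_num : (-4 : ℂ) ≠ 0)) <;>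
    · ext i j
      fin_cases i <;> fin_cases j <;>
        · simp only [Matrix.mul_apply, Fin.sum_univ_four, hessian_entry]
          norm_num [Matrix.diagonal, Matrix.one_apply, Matrix.vecHead, Matrix.vecTail,
            Fin.mk_zero, Fin.mk_one, show (⟨2, by norm_num⟩ : Fin 4) = 2 from rfl,
            show (⟨3, by norm_num⟩ : Fin 4) = 3 from rfl] <;>
          (try split_ifs) <;> (try simp_all (config := { decide := true })) <;> (try norm_num) <;> (try decide)
  · refine ⟨by simp [f0, q]; norm_num, fun i => by rw [pderiv_F]; fin_cases i <;> simp [q] <;> norm_num, ?_⟩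
    refine rank_case _ _ !![1,1,1,0;1,-1,0,0;1,0,-1,0;0,0,0,1]
      !![1/3,1/3,1/3,0;1/3,-2/3,1/3,0;1/3,1/3,-2/3,0;0,0,0,1] ![0, 8, 8, -4] ?_ ?_ rfl
      (by norm_num) (by exact (by norm_num : (8 : ℂ) ≠ 0)) (by exact (by norm_num : (-4 : ℂ) ≠ 0)) <;>
    · ext i j
      fin_cases i <;> fin_cases j <;>
        · simp only [Matrix.mul_apply, Fin.sum_univ_four, hessian_entry]
          norm_num [Matrix.diagonal, Matrix.one_apply, Matrix.vecHead, Matrix.vecTail,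
            Fin.mk_zero, Fin.mk_one, show (⟨2, by norm_num⟩ : Fin 4) = 2 from rfl,
            show (⟨3, by norm_num⟩ : Fin 4) = 3 from rfl] <;>
          (try split_ifs) <;> (try simp_all (config := { decide := true })) <;> (try norm_num) <;> (try decide)
  · refine ⟨by simp [f0, q]; norm_num, fun i => by rw [pderiv_F]; fin_cases i <;> simp [q] <;> norm_num, ?_⟩
    refine rank_case _ _ !![1,1,1,1;1,-1,0,0;1,0,-1,0;1,0,0,-1]
      !![1/4,1/4,1/4,1/4;1/4,-3/4,1/4,1/4;1/4,1/4,-3/4,1/4;1/4,1/4,1/4,-3/4] ![0, 8, 8, 8] ?_ ?_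
      rfl (by norm_num) (by exact (by norm_num : (8 : ℂ) ≠ 0)) (by exact (by norm_num : (8 : ℂ) ≠ 0)) <;>
    · ext i j
      fin_cases i <;> fin_cases j <;>
        · simp only [Matrix.mul_apply, Fin.sum_univ_four, hessian_entry]
          norm_num [Matrix.diagonal, Matrix.one_apply, Matrix.vecHead, Matrix.vecTail,
            Fin.mk_zero, Fin.mk_one, show (⟨2, by norm_num⟩ : Fin 4) = 2 from rfl,
            show (⟨3, by norm_num⟩ : Fin 4) = 3 from rfl] <;>
          (try split_ifs) <;> (try simp_all (config := { decide := true })) <;> (try norm_num) <;> (try decide)
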